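/- Let n be a positive integer, Q = 2n + 2, c = n!/(4(π/2)^{n+1}), and for t > 0 and g = (s,z) ∈ ℋ_n set S(t,g) = c/(|z|² + t − i s)^{n+1}. There is a constant C > 0 depending only on n such that for all t > 0, τ > 0 and γ > 0, ∫_{{g ∈ ℋ_n : ‖g‖ > γτ}} |S(t,g) − S(t+τ², g)| dg ≤ C γ^{−2}, the integral being with respect to Lebesgue measure on ℋ_n = ℝ × ℂ^n. -/

import Mathlib

open MeasureTheory

noncomputable section

/-- A point of the Heisenberg group ℋ_n : `(s, z) ∈ ℝ × ℂⁿ`. -/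
abbrev Heis (n : ℕ) := ℝ × (Fin n → ℂ)

/-- `|z|² = ∑ⱼ |zⱼ|²`. -/
def znormSq {n : ℕ} (z : Fin n → ℂ) : ℝ := ∑ j, Complex.normSq (z j)

/-- The homogeneous norm `‖(s,z)‖ = (|z|⁴ + s²)^{1/4}`. -/
def hnorm {n : ℕ} (g : Heis n) : ℝ := ((znormSq g.2) ^ 2 + g.1 ^ 2) ^ (1/4 : ℝ)

/-- The constant `c = n! / (4 (π/2)^{n+1})`. -/
def szegoConst (n : ℕ) : ℝ := (Nat.factorial n : ℝ) / (4 * (Real.pi / 2) ^ (n + 1))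

/-- The Cauchy–Szegő kernel `S(t,g) = c/(|z|² + t − i s)^{n+1}`. -/
def Szego (n : ℕ) (t : ℝ) (g : Heis n) : ℂ :=
  (szegoConst n : ℂ) / (((znormSq g.2 : ℝ) : ℂ) + (t : ℂ) - Complex.I * (g.1 : ℂ)) ^ (n + 1)

/-! ### Auxiliary lemmas -/

lemma znormSq_nonneg {n : ℕ} (z : Fin n → ℂ) : 0 ≤ znormSq z :=
  Finset.sum_nonneg fun _ _ => Complex.normSq_nonneg _

lemma hnorm_nonneg {n : ℕ} (g : Heis n) : 0 ≤ hnorm g :=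
  Real.rpow_nonneg (by positivity) _

lemma continuous_hnorm {n : ℕ} : Continuous (hnorm (n := n)) := by
  apply Continuous.rpow_const
  · apply Continuous.add
    · exact (continuous_finset_sum _ fun j _ =>
        Complex.continuous_normSq.comp ((continuous_apply j).comp continuous_snd)).pow 2
    · exact (continuous_fst).pow 2
  · intro x; right; norm_num

lemma hnorm_pow_four {n : ℕ} (g : Heis n) :
    hnorm g ^ (4 : ℕ) = (znormSq g.2) ^ 2 + g.1 ^ 2 := by
  rw [hnorm, ← Real.rpow_natCast (((znormSq g.2) ^ 2 + g.1 ^ 2) ^ (1/4 : ℝ)) 4,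
    ← Real.rpow_mul (by positivity)]
  norm_num

lemma hnorm_sq {n : ℕ} (g : Heis n) :
    hnorm g ^ (2 : ℕ) = ((znormSq g.2) ^ 2 + g.1 ^ 2) ^ (1/2 : ℝ) := by
  rw [hnorm, ← Real.rpow_natCast (((znormSq g.2) ^ 2 + g.1 ^ 2) ^ (1/4 : ℝ)) 2,
    ← Real.rpow_mul (by positivity)]
  norm_num

lemma szegoConst_pos (n : ℕ) : 0 < szegoConst n := by
  have := Real.pi_pos
  have := Nat.factorial_pos n
  unfold szegoConst; positivity

/-- The complex number `w = |z|² + t − i s`. -/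
def wC {n : ℕ} (t : ℝ) (g : Heis n) : ℂ :=
  (((znormSq g.2 : ℝ) : ℂ) + (t : ℂ) - Complex.I * (g.1 : ℂ))

lemma abs_wC {n : ℕ} (t : ℝ) (g : Heis n) :
    ‖wC t g‖ = ((znormSq g.2 + t) ^ 2 + g.1 ^ 2) ^ (1/2 : ℝ) := by
  rw [Complex.norm_def, Complex.normSq_apply, Real.sqrt_eq_rpow]
  congr 1
  simp [wC]
  ring

lemma hnorm_sq_le_abs_wC {n : ℕ} {t : ℝ} (ht : 0 ≤ t) (g : Heis n) :
    hnorm g ^ (2:ℕ) ≤ ‖wC t g‖ := by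
  rw [hnorm_sq, abs_wC]
  apply Real.rpow_le_rpow (by positivity) _ (by norm_num)
  have h1 : znormSq g.2 ^ 2 ≤ (znormSq g.2 + t) ^ 2 := by
    nlinarith [znormSq_nonneg g.2]
  linarith

lemma t_le_abs_wC {n : ℕ} {t : ℝ} (ht : 0 ≤ t) (g : Heis n) :
    t ≤ ‖wC t g‖ := by
  have h : (wC t g).re = znormSq g.2 + t := by simp [wC]
  calc t ≤ (wC t g).re := by rw [h]; linarith [znormSq_nonneg g.2]
    _ ≤ |(wC t g).re| := le_abs_self _
    _ ≤ ‖wC t g‖ := Complex.abs_re_le_norm _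

lemma abs_wC_mono {n : ℕ} {t t' : ℝ} (ht : 0 ≤ t) (htt' : t ≤ t') (g : Heis n) :
    ‖wC t g‖ ≤ ‖wC t' g‖ := by
  rw [abs_wC, abs_wC]
  apply Real.rpow_le_rpow (by positivity) _ (by norm_num)
  have : (znormSq g.2 + t) ^ 2 ≤ (znormSq g.2 + t') ^ 2 := by
    nlinarith [znormSq_nonneg g.2]
  linarith

lemma wC_shift {n : ℕ} (t τ : ℝ) (g : Heis n) :
    wC (t + τ^2) g = wC t g + (τ^2 : ℝ) := by
  simp [wC]; ring

/-! ### The pointwise bound -/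

lemma szego_pointwise (n : ℕ) {t τ : ℝ} (ht : 0 < t) (hτ : 0 ≤ τ) (g : Heis n)
    (hg : 0 < hnorm g) :
    ‖Szego n t g - Szego n (t + τ^2) g‖
      ≤ szegoConst n * (n+1) * τ^2 / hnorm g ^ (2*n+4) := by
  set m : ℕ := n + 1 with hm
  set w := wC t g with hw
  set w' := wC (t + τ^2) g with hw'
  set A := ‖w‖ with hA
  set A' := ‖w'‖ with hA'
  set h := hnorm g with hh
  have ht' : (0:ℝ) < t + τ^2 := by positivity
  have hApos : 0 < A := lt_of_lt_of_le ht (t_le_abs_wC ht.le g)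
  have hA'pos : 0 < A' := lt_of_lt_of_le ht' (t_le_abs_wC ht'.le g)
  have hAA' : A ≤ A' := abs_wC_mono ht.le (by nlinarith) g
  have hwne : w ≠ 0 := norm_pos_iff.mp hApos
  have hw'ne : w' ≠ 0 := norm_pos_iff.mp hA'pos
  have h2A : h ^ (2:ℕ) ≤ A := hnorm_sq_le_abs_wC ht.le g
  have h2A' : h ^ (2:ℕ) ≤ A' := hnorm_sq_le_abs_wC ht'.le g
  have e1 : Szego n t g = (szegoConst n : ℂ) / w ^ m := rfl
  have e2 : Szego n (t + τ^2) g = (szegoConst n : ℂ) / w' ^ m := rfl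
  have hdiff : Szego n t g - Szego n (t + τ^2) g
      = (szegoConst n : ℂ) * (w' ^ m - w ^ m) / (w ^ m * w' ^ m) := by
    rw [e1, e2, div_sub_div _ _ (pow_ne_zero m hwne) (pow_ne_zero m hw'ne)]
    ring
  have hgeom : ‖w' ^ m - w ^ m‖ ≤ m * A' ^ n * τ ^ 2 := by
    have hid : (∑ i ∈ Finset.range m, w' ^ i * w ^ (m - 1 - i)) * (w' - w)
        = w' ^ m - w ^ m := geom_sum₂_mul w' w m
    have hsub : w' - w = (τ^2 : ℝ) := by rw [hw', hw, wC_shift]; ring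
    rw [← hid, hsub, norm_mul]
    have hτn : ‖((τ^2 : ℝ) : ℂ)‖ = τ ^ 2 := by
      rw [Complex.norm_real, Real.norm_eq_abs, abs_of_nonneg (by positivity)]
    rw [hτn]
    apply mul_le_mul_of_nonneg_right _ (by positivity)
    calc ‖∑ i ∈ Finset.range m, w' ^ i * w ^ (m - 1 - i)‖
        ≤ ∑ i ∈ Finset.range m, ‖w' ^ i * w ^ (m - 1 - i)‖ := norm_sum_le _ _
      _ ≤ ∑ _i ∈ Finset.range m, A' ^ n := by
          apply Finset.sum_le_sum
          intro i hi
          rw [norm_mul, norm_pow, norm_pow]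
          have hi' : i ≤ m - 1 := Nat.le_sub_one_of_lt (Finset.mem_range.mp hi)
          calc ‖w'‖ ^ i * ‖w‖ ^ (m - 1 - i)
              ≤ A' ^ i * A' ^ (m - 1 - i) := by
                apply mul_le_mul_of_nonneg_left _ (by positivity)
                exact pow_le_pow_left₀ hApos.le hAA' _
            _ = A' ^ (m - 1) := by
                rw [← pow_add, Nat.add_sub_cancel' hi']
            _ = A' ^ n := by rw [hm]; norm_num
      _ = m * A' ^ n := by
          rw [Finset.sum_const, Finset.card_range, nsmul_eq_mul]
  have hnormeq : ‖Szego n t g - Szego n (t + τ^2) g‖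
      = szegoConst n * ‖w' ^ m - w ^ m‖ / (A ^ m * A' ^ m) := by
    rw [hdiff, norm_div, norm_mul, Complex.norm_real, Real.norm_eq_abs,
      abs_of_nonneg (szegoConst_pos n).le, norm_mul, norm_pow, norm_pow]
  rw [hnormeq]
  have hc := (szegoConst_pos n).le
  have hden : (0:ℝ) < A ^ m * A' ^ m := by positivity
  calc szegoConst n * ‖w' ^ m - w ^ m‖ / (A ^ m * A' ^ m)
      ≤ szegoConst n * (m * A' ^ n * τ ^ 2) / (A ^ m * A' ^ m) := by
        gcongr
    _ = szegoConst n * m * τ ^ 2 / (A ^ m * A') := by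
        have hms : A' ^ m = A' ^ n * A' := by rw [hm, pow_succ]
        rw [hms]
        field_simp
    _ ≤ szegoConst n * m * τ ^ 2 / h ^ (2*n+4) := by
        apply div_le_div_of_nonneg_left (by positivity) (by positivity)
        calc h ^ (2*n+4) = (h^(2:ℕ))^m * h^(2:ℕ) := by rw [hm]; ring
          _ ≤ A ^ m * A' := by
              apply mul_le_mul (pow_le_pow_left₀ (by positivity) h2A m) h2A'
                (by positivity) (by positivity)
    _ = szegoConst n * (n+1) * τ^2 / h ^ (2*n+4) := by
        rw [hm]; push_cast; ring

/-! ### Volume scaling -/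

lemma prod_smul_smul {α β : Type*} [MeasurableSpace α] [MeasurableSpace β]
    (μ : Measure α) (ν : Measure β) [SFinite μ] [SFinite ν] (c d : ENNReal) :
    (c • μ).prod (d • ν) = (c * d) • (μ.prod ν) := by
  ext s hs
  rw [Measure.prod_apply hs, Measure.smul_apply, Measure.prod_apply hs,
    lintegral_smul_measure]
  simp only [Measure.smul_apply, smul_eq_mul]
  rw [lintegral_const_mul d (measurable_measure_prodMk_left hs)]
  ring

lemma znormSq_smul {n : ℕ} (r : ℝ) (z : Fin n → ℂ) :
    znormSq (r • z) = r^2 * znormSq z := by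
  unfold znormSq
  rw [Finset.mul_sum]
  congr 1; ext j
  rw [Pi.smul_apply, Complex.real_smul, Complex.normSq_mul, Complex.normSq_ofReal]
  ring

lemma hnorm_dilate {n : ℕ} {r : ℝ} (hr : 0 < r) (g : Heis n) :
    hnorm ((r^2 * g.1, r • g.2) : Heis n) = r * hnorm g := by
  unfold hnorm
  simp only
  rw [znormSq_smul]
  have h4 : (r ^ 2 * znormSq g.2) ^ 2 + (r^2 * g.1) ^ 2
      = r^4 * (znormSq g.2 ^ 2 + g.1 ^ 2) := by ring
  rw [h4, Real.mul_rpow (by positivity) (by positivity)]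
  congr 1
  rw [← Real.rpow_natCast r 4, ← Real.rpow_mul hr.le]
  norm_num

lemma finrank_pi_complex (n : ℕ) : Module.finrank ℝ (Fin n → ℂ) = 2 * n := by
  rw [Module.finrank_pi_fintype]
  simp [Complex.finrank_real_complex]
  ring

lemma measurableSet_hball {n : ℕ} (r : ℝ) :
    MeasurableSet {g : Heis n | hnorm g ≤ r} :=
  measurableSet_le (continuous_hnorm.measurable) measurable_const

lemma vol_hball_scale (n : ℕ) {r : ℝ} (hr : 0 < r) :
    volume {g : Heis n | hnorm g ≤ r}
      = ENNReal.ofReal (r ^ (2*n+2)) * volume {g : Heis n | hnorm g ≤ 1} := by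
  set T : Heis n → Heis n := fun g => (r^2 * g.1, r • g.2) with hT
  have hTm : Measurable T := by
    apply Measurable.prod
    · exact (measurable_fst).const_mul _
    · exact measurable_snd.const_smul r
  have hmap : Measure.map T volume
      = ENNReal.ofReal ((r ^ (2*n+2))⁻¹) • (volume : Measure (Heis n)) := by
    have h1 : Measure.map (fun s : ℝ => r^2 * s) volume
        = ENNReal.ofReal |(r^2)⁻¹| • volume := Real.map_volume_mul_left (by positivity)
    have h2 : Measure.map (fun z : Fin n → ℂ => r • z) volume
        = ENNReal.ofReal |(r ^ Module.finrank ℝ (Fin n → ℂ))⁻¹| • volume :=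
      Measure.map_addHaar_smul volume hr.ne'
    calc Measure.map T volume
        = Measure.map (Prod.map (fun s : ℝ => r^2 * s) (fun z : Fin n → ℂ => r • z))
            ((volume : Measure ℝ).prod (volume : Measure (Fin n → ℂ))) := by
          rw [← Measure.volume_eq_prod]; rfl
      _ = (Measure.map (fun s : ℝ => r^2 * s) volume).prod
            (Measure.map (fun z : Fin n → ℂ => r • z) volume) :=
          (Measure.map_prod_map volume volume ((measurable_id).const_mul (r^2))
            (measurable_id.const_smul r)).symm
      _ = (ENNReal.ofReal |(r^2)⁻¹| • volume).prod
            (ENNReal.ofReal |(r ^ Module.finrank ℝ (Fin n → ℂ))⁻¹| • volume) := by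
          rw [h1, h2]
      _ = ENNReal.ofReal ((r ^ (2*n+2))⁻¹) • (volume : Measure (Heis n)) := by
          rw [prod_smul_smul, ← Measure.volume_eq_prod, ← ENNReal.ofReal_mul (by positivity),
            finrank_pi_complex]
          congr 2
          rw [abs_of_nonneg (by positivity), abs_of_nonneg (by positivity)]
          rw [← mul_inv, ← pow_add]
          congr 2
          ring
  have hpre : T ⁻¹' {g : Heis n | hnorm g ≤ r} = {g : Heis n | hnorm g ≤ 1} := by
    ext g
    simp only [Set.mem_preimage, Set.mem_setOf_eq, hT]
    rw [hnorm_dilate hr]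
    constructor
    · intro h; nlinarith [hnorm_nonneg g]
    · intro h; nlinarith
  have hkey := Measure.map_apply (μ := (volume : Measure (Heis n))) hTm
    (measurableSet_hball (n := n) r)
  rw [hmap, hpre] at hkey
  simp only [Measure.smul_apply, smul_eq_mul] at hkey
  rw [← hkey, ← mul_assoc, ← ENNReal.ofReal_mul (by positivity),
    mul_inv_cancel₀ (by positivity), ENNReal.ofReal_one, one_mul]

lemma vol_hball_lt_top (n : ℕ) : volume {g : Heis n | hnorm g ≤ 1} < ⊤ := by
  have hsub : {g : Heis n | hnorm g ≤ 1}
      ⊆ (Set.Icc (-1 : ℝ) 1) ×ˢ (Metric.closedBall (0 : Fin n → ℂ) 1) := by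
    intro g hg
    simp only [Set.mem_setOf_eq] at hg
    have h4 : (znormSq g.2) ^ 2 + g.1 ^ 2 ≤ 1 := by
      rw [← hnorm_pow_four]
      exact pow_le_one₀ (hnorm_nonneg g) hg
    have hz2 : znormSq g.2 ≤ 1 := by nlinarith [znormSq_nonneg g.2]
    have hs2 : g.1 ^ 2 ≤ 1 := by nlinarith [znormSq_nonneg g.2]
    constructor
    · simp only [Set.mem_Icc]
      constructor <;> nlinarith
    · rw [Metric.mem_closedBall, dist_zero_right]
      rw [pi_norm_le_iff_of_nonneg (by norm_num)]
      intro j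
      have hle : Complex.normSq (g.2 j) ≤ znormSq g.2 :=
        Finset.single_le_sum (fun i _ => Complex.normSq_nonneg (g.2 i))
          (Finset.mem_univ j)
      have hsq : ‖g.2 j‖ ^ 2 = Complex.normSq (g.2 j) := by
        rw [← Complex.sq_norm]
      nlinarith [norm_nonneg (g.2 j)]
  refine lt_of_le_of_lt (measure_mono hsub) ?_
  exact (isCompact_Icc.prod (isCompact_closedBall _ _)).measure_lt_top

/-! ### Dyadic shells -/

lemma exists_shell {R x : ℝ} (hR : 0 < R) (hx : R < x) :
    ∃ k : ℕ, R * 2^k < x ∧ x ≤ R * 2^(k+1) := by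
  have hex : ∃ j : ℕ, x ≤ R * 2^(j+1) := by
    obtain ⟨j, hj⟩ := pow_unbounded_of_one_lt (x / R) one_lt_two
    refine ⟨j, ?_⟩
    rw [div_lt_iff₀ hR] at hj
    have h2 : (2:ℝ)^j ≤ 2^(j+1) := by
      apply pow_le_pow_right₀ (by norm_num) (by omega)
    nlinarith
  classical
  let k := Nat.find hex
  refine ⟨k, ?_, Nat.find_spec hex⟩
  rcases Nat.eq_zero_or_pos k with hk | hk
  · rw [hk]; simpa using hx
  · have hmin := Nat.find_min hex (m := k - 1) (by omega)
    push_neg at hmin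
    have hkk : k - 1 + 1 = k := by omega
    rwa [hkk] at hmin

lemma calc_aux (n k : ℕ) {R : ℝ} (hR : 0 < R) :
    ((R*2^k)^(2*n+4))⁻¹ * (R*2^(k+1))^(2*n+2)
      = (R^2)⁻¹ * 2^(2*n+2) * (((1:ℝ)/2)^k)^2 := by
  have h2 : (0:ℝ) < 2 ^ k := by positivity
  rw [one_div, inv_pow]
  field_simp
  ring

lemma tail_bound (n : ℕ) {R : ℝ} (hR : 0 < R) :
    ∫⁻ g in {g : Heis n | R < hnorm g}, (ENNReal.ofReal (hnorm g ^ (2*n+4)))⁻¹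
      ≤ ENNReal.ofReal ((R^2)⁻¹ * 2^(2*n+3)) * volume {g : Heis n | hnorm g ≤ 1} := by
  set V := volume {g : Heis n | hnorm g ≤ 1} with hV
  set f : Heis n → ENNReal := fun g => (ENNReal.ofReal (hnorm g ^ (2*n+4)))⁻¹ with hf
  set A : ℕ → Set (Heis n) := fun k => {g | R * 2^k < hnorm g ∧ hnorm g ≤ R*2^(k+1)}
    with hA
  have hsub : {g : Heis n | R < hnorm g} ⊆ ⋃ k, A k := by
    intro g hg
    obtain ⟨k, h1, h2⟩ := exists_shell hR hg
    exact Set.mem_iUnion.mpr ⟨k, h1, h2⟩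
  have hterm : ∀ k : ℕ, ∫⁻ g in A k, f g
      ≤ ENNReal.ofReal ((R^2)⁻¹ * 2^(2*n+2) * ((1:ℝ)/2)^k) * V := by
    intro k
    have hRk : (0:ℝ) < R * 2^k := by positivity
    have hRk1 : (0:ℝ) < R * 2^(k+1) := by positivity
    have hconst : ∀ g ∈ A k, f g ≤ ENNReal.ofReal (((R*2^k)^(2*n+4))⁻¹) := by
      intro g hg
      rw [hf]
      rw [ENNReal.ofReal_inv_of_pos (by positivity)]
      apply ENNReal.inv_le_inv.mpr
      apply ENNReal.ofReal_le_ofReal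
      exact pow_le_pow_left₀ hRk.le hg.1.le _
    calc ∫⁻ g in A k, f g
        ≤ ∫⁻ _g in A k, ENNReal.ofReal (((R*2^k)^(2*n+4))⁻¹) :=
          setLIntegral_mono measurable_const hconst
      _ = ENNReal.ofReal (((R*2^k)^(2*n+4))⁻¹) * volume (A k) := setLIntegral_const _ _
      _ ≤ ENNReal.ofReal (((R*2^k)^(2*n+4))⁻¹)
            * (ENNReal.ofReal ((R*2^(k+1))^(2*n+2)) * V) := by
          apply mul_le_mul_right _ _
          rw [hV, ← vol_hball_scale n hRk1]
          exact measure_mono (fun g hg => hg.2)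
      _ = ENNReal.ofReal ((R^2)⁻¹ * 2^(2*n+2) * (((1:ℝ)/2)^k)^2) * V := by
          rw [← mul_assoc, ← ENNReal.ofReal_mul (by positivity), calc_aux n k hR]
      _ ≤ ENNReal.ofReal ((R^2)⁻¹ * 2^(2*n+2) * ((1:ℝ)/2)^k) * V := by
          apply mul_le_mul_left
          apply ENNReal.ofReal_le_ofReal
          have h1 : ((1:ℝ)/2)^k ≤ 1 := pow_le_one₀ (by norm_num) (by norm_num)
          have h2 : (0:ℝ) ≤ ((1:ℝ)/2)^k := by positivity
          have h3 : (((1:ℝ)/2)^k)^2 ≤ ((1:ℝ)/2)^k := by nlinarith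
          apply mul_le_mul_of_nonneg_left h3 (by positivity)
  show ∫⁻ g in {g : Heis n | R < hnorm g}, f g ≤ _
  calc ∫⁻ g in {g : Heis n | R < hnorm g}, f g
      ≤ ∫⁻ g in ⋃ k, A k, f g :=
        lintegral_mono' (Measure.restrict_mono hsub le_rfl) le_rfl
    _ ≤ ∑' k, ∫⁻ g in A k, f g := lintegral_iUnion_le _ _
    _ ≤ ∑' k, ENNReal.ofReal ((R^2)⁻¹ * 2^(2*n+2) * ((1:ℝ)/2)^k) * V :=
        ENNReal.tsum_le_tsum hterm
    _ = ENNReal.ofReal ((R^2)⁻¹ * 2^(2*n+2)) * (∑' k : ℕ, (ENNReal.ofReal ((1:ℝ)/2))^k) * V := by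
        rw [ENNReal.tsum_mul_right]
        congr 1
        rw [← ENNReal.tsum_mul_left]
        apply tsum_congr
        intro k
        rw [← ENNReal.ofReal_pow (by norm_num), ← ENNReal.ofReal_mul (by positivity)]
    _ = ENNReal.ofReal ((R^2)⁻¹ * 2^(2*n+2)) * 2 * V := by
        congr 2
        rw [ENNReal.tsum_geometric]
        rw [show ENNReal.ofReal ((1:ℝ)/2) = 2⁻¹ by
          rw [one_div, ENNReal.ofReal_inv_of_pos (by norm_num)]
          norm_num]
        rw [ENNReal.one_sub_inv_two, inv_inv]
    _ = ENNReal.ofReal ((R^2)⁻¹ * 2^(2*n+3)) * V := by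
        congr 1
        rw [show (2 : ENNReal) = ENNReal.ofReal 2 by norm_num,
          ← ENNReal.ofReal_mul (by positivity)]
        congr 1
        ring

/-! ### Main theorem -/

/-- Integral estimate for the Cauchy–Szegő kernel difference outside a ball. -/
theorem szego_kernel_difference_integral (n : ℕ) (hn : 0 < n) :
    ∃ C : ℝ, 0 < C ∧ ∀ t τ γ : ℝ, 0 < t → 0 < τ → 0 < γ →
      ∫⁻ g in {g : Heis n | γ * τ < hnorm g},
          ENNReal.ofReal ‖Szego n t g - Szego n (t + τ ^ 2) g‖
        ≤ ENNReal.ofReal (C / γ ^ 2) := by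
  set M : ℝ := (volume {g : Heis n | hnorm g ≤ 1}).toReal with hM
  have hM0 : 0 ≤ M := ENNReal.toReal_nonneg
  have hMV : ENNReal.ofReal M = volume {g : Heis n | hnorm g ≤ 1} :=
    ENNReal.ofReal_toReal (vol_hball_lt_top n).ne
  set K : ℝ := szegoConst n * (n+1) with hK
  have hK0 : 0 < K := by
    have := szegoConst_pos n
    positivity
  refine ⟨K * 2^(2*n+3) * M + 1, by positivity, ?_⟩
  intro t τ γ ht hτ hγ
  have hR : (0:ℝ) < γ * τ := by positivity
  have hbm : Measurable fun g : Heis n =>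
      ENNReal.ofReal (K * τ^2) * (ENNReal.ofReal (hnorm g ^ (2*n+4)))⁻¹ := by
    apply Measurable.const_mul
    exact ((continuous_hnorm.pow _).measurable.ennreal_ofReal).inv
  have hpoint : ∀ g ∈ {g : Heis n | γ * τ < hnorm g},
      ENNReal.ofReal ‖Szego n t g - Szego n (t + τ ^ 2) g‖
        ≤ ENNReal.ofReal (K * τ^2) * (ENNReal.ofReal (hnorm g ^ (2*n+4)))⁻¹ := by
    intro g hg
    have hg' : 0 < hnorm g := lt_trans hR hg
    have hp := szego_pointwise n ht hτ.le g hg'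
    calc ENNReal.ofReal ‖Szego n t g - Szego n (t + τ ^ 2) g‖
        ≤ ENNReal.ofReal (K * τ^2 / hnorm g ^ (2*n+4)) := ENNReal.ofReal_le_ofReal hp
      _ = ENNReal.ofReal (K * τ^2) * (ENNReal.ofReal (hnorm g ^ (2*n+4)))⁻¹ := by
          rw [ENNReal.ofReal_div_of_pos (by positivity), div_eq_mul_inv]
  calc ∫⁻ g in {g : Heis n | γ * τ < hnorm g},
          ENNReal.ofReal ‖Szego n t g - Szego n (t + τ ^ 2) g‖
      ≤ ∫⁻ g in {g : Heis n | γ * τ < hnorm g},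
          ENNReal.ofReal (K * τ^2) * (ENNReal.ofReal (hnorm g ^ (2*n+4)))⁻¹ :=
        setLIntegral_mono hbm hpoint
    _ = ENNReal.ofReal (K * τ^2)
          * ∫⁻ g in {g : Heis n | γ * τ < hnorm g},
              (ENNReal.ofReal (hnorm g ^ (2*n+4)))⁻¹ :=
        lintegral_const_mul' _ _ ENNReal.ofReal_ne_top
    _ ≤ ENNReal.ofReal (K * τ^2)
          * (ENNReal.ofReal ((((γ*τ))^2)⁻¹ * 2^(2*n+3)) * volume {g : Heis n | hnorm g ≤ 1}) :=
        mul_le_mul_right (tail_bound n hR) _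
    _ = ENNReal.ofReal (K * τ^2 * ((((γ*τ))^2)⁻¹ * 2^(2*n+3)) * M) := by
        rw [← hMV, ← ENNReal.ofReal_mul (by positivity), ← ENNReal.ofReal_mul (by positivity)]
        congr 1
        ring
    _ = ENNReal.ofReal ((K * 2^(2*n+3) * M) / γ^2) := by
        congr 1
        field_simp
    _ ≤ ENNReal.ofReal ((K * 2^(2*n+3) * M + 1) / γ^2) := by
        apply ENNReal.ofReal_le_ofReal
        gcongr
        linarith
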